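/- For every odd integer n ≥ 1 and every integer k ≥ 1, the alternating sum J_{n,k} = (−1)^k · Σ_{j=0}^{k} ((−1)^j/(2j)!) · (nπ/2)^{2j} is strictly positive. -/

import Mathlib

open Real

/-- `J_{n,k} = (-1)^k Σ_{j=0}^{k} ((-1)^j/(2j)!) (nπ/2)^{2j}`. -/
noncomputable def J (n k : ℕ) : ℝ :=
  (-1 : ℝ) ^ k * ∑ j ∈ Finset.range (k + 1),
    ((-1 : ℝ) ^ j / (Nat.factorial (2 * j) : ℝ)) * ((n : ℝ) * π / 2) ^ (2 * j)

noncomputable def Pser (m : ℕ) (x : ℝ) : ℝ :=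
  ∑ j ∈ Finset.range m, (-1 : ℝ) ^ j * x ^ (2 * j) / (Nat.factorial (2 * j) : ℝ)

noncomputable def Tser (k : ℕ) (x : ℝ) : ℝ :=
  ∑ j ∈ Finset.range k, (-1 : ℝ) ^ j * x ^ (2 * j + 1) / (Nat.factorial (2 * j + 1) : ℝ)

lemma hasDerivAt_term (c : ℝ) (m : ℕ) (x : ℝ) :
    HasDerivAt (fun y : ℝ => c * y ^ m / (Nat.factorial m : ℝ))
      (c * (m * x ^ (m - 1)) / (Nat.factorial m : ℝ)) x := by
  exact ((hasDerivAt_pow m x).const_mul c).div_const _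

lemma hasDerivAt_Tser (k : ℕ) (x : ℝ) :
    HasDerivAt (fun y => Tser k y) (Pser k x) x := by
  have : HasDerivAt (fun y => Tser k y)
      (∑ j ∈ Finset.range k,
        (-1 : ℝ) ^ j * ((2 * j + 1) * x ^ (2 * j)) / (Nat.factorial (2 * j + 1) : ℝ)) x := by
    apply HasDerivAt.fun_sum
    intro j _
    simpa using hasDerivAt_term ((-1 : ℝ) ^ j) (2 * j + 1) x
  convert this using 1
  unfold Pser
  apply Finset.sum_congr rfl
  intro j _
  rw [Nat.factorial_succ]
  have h1 : ((2 * j + 1).factorial : ℝ) ≠ 0 := Nat.cast_ne_zero.mpr (Nat.factorial_ne_zero _)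
  have h2 : ((2 * j).factorial : ℝ) ≠ 0 := Nat.cast_ne_zero.mpr (Nat.factorial_ne_zero _)
  push_cast
  field_simp

lemma hasDerivAt_Pser (m : ℕ) (x : ℝ) :
    HasDerivAt (fun y => Pser (m + 1) y) (-(Tser m x)) x := by
  have : HasDerivAt (fun y => Pser (m + 1) y)
      (∑ j ∈ Finset.range (m + 1),
        (-1 : ℝ) ^ j * ((2 * j) * x ^ (2 * j - 1)) / (Nat.factorial (2 * j) : ℝ)) x := by
    apply HasDerivAt.fun_sum
    intro j _
    simpa using hasDerivAt_term ((-1 : ℝ) ^ j) (2 * j) x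
  convert this using 1
  rw [Finset.sum_range_succ']
  have hz : ((-1 : ℝ) ^ (0:ℕ) * (2 * ((0:ℕ) : ℝ) * x ^ (2 * 0 - 1)) / ((2 * 0).factorial : ℝ)) = 0 := by
    norm_num
  rw [hz, add_zero]
  unfold Tser
  rw [← Finset.sum_neg_distrib]
  apply Finset.sum_congr rfl
  intro i _
  have he : 2 * (i + 1) = 2 * i + 2 := by ring
  rw [he]
  have h2 : 2 * i + 2 - 1 = 2 * i + 1 := by omega
  rw [h2]
  rw [show (2 * i + 2).factorial = (2 * i + 2) * (2 * i + 1).factorial from by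
    rw [← Nat.factorial_succ]]
  have h1 : ((2 * i + 1).factorial : ℝ) ≠ 0 := Nat.cast_ne_zero.mpr (Nat.factorial_ne_zero _)
  push_cast
  rw [pow_succ]
  field_simp
  ring

lemma Pser_zero (m : ℕ) : Pser (m + 1) 0 = 1 := by
  unfold Pser
  rw [Finset.sum_eq_single 0]
  · norm_num
  · intro b _ hb
    have h : 2 * b ≠ 0 := by omega
    simp [zero_pow h]
  · intro h
    simp at h

lemma pos_of_deriv_pos (f f' : ℝ → ℝ) (hf : ∀ x, HasDerivAt f (f' x) x) (h0 : f 0 = 0)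
    (hpos : ∀ x, 0 < x → 0 < f' x) : ∀ x, 0 < x → 0 < f x := by
  intro x hx
  have hm : StrictMonoOn f (Set.Ici 0) := by
    apply strictMonoOn_of_deriv_pos (convex_Ici 0)
    · exact fun y _ => (hf y).continuousAt.continuousWithinAt
    · intro y hy
      rw [interior_Ici] at hy
      rw [(hf y).deriv]
      exact hpos y hy
  have := hm (by simp : (0:ℝ) ∈ Set.Ici 0) (Set.mem_Ici.mpr hx.le) hx
  rwa [h0] at this

lemma key : ∀ k, 1 ≤ k → ∀ x, 0 < x →
    0 < (-1 : ℝ) ^ (k + 1) * (Tser k x - Real.sin x) ∧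
    0 < (-1 : ℝ) ^ k * (Pser (k + 1) x - Real.cos x) := by
  intro k hk
  induction k, hk using Nat.le_induction with
  | base =>
    intro x hx
    have hT : Tser 1 x = x := by simp [Tser]
    have h1 : 0 < (-1 : ℝ) ^ (1 + 1) * (Tser 1 x - Real.sin x) := by
      rw [hT]
      simpa using sub_pos.mpr (Real.sin_lt hx)
    refine ⟨h1, ?_⟩
    have := pos_of_deriv_pos
      (fun y => (-1 : ℝ) ^ 1 * (Pser 2 y - Real.cos y))
      (fun y => (-1 : ℝ) ^ (1 + 1) * (Tser 1 y - Real.sin y))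
      (fun y => by
        have := ((hasDerivAt_Pser 1 y).sub (Real.hasDerivAt_cos y)).const_mul ((-1 : ℝ) ^ 1)
        refine this.congr_deriv ?_
        ring)
      (by simp [Pser_zero])
      (fun y hy => by
        show 0 < (-1 : ℝ) ^ (1 + 1) * (Tser 1 y - Real.sin y)
        have hT' : Tser 1 y = y := by simp [Tser]
        rw [hT']
        simpa using sub_pos.mpr (Real.sin_lt hy))
      x hx
    simpa using this
  | succ m hm ih =>
    intro x hx
    have hTpos : 0 < (-1 : ℝ) ^ (m + 1 + 1) * (Tser (m + 1) x - Real.sin x) := by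
      apply pos_of_deriv_pos
        (fun y => (-1 : ℝ) ^ (m + 1 + 1) * (Tser (m + 1) y - Real.sin y))
        (fun y => (-1 : ℝ) ^ m * (Pser (m + 1) y - Real.cos y))
      · intro y
        have := ((hasDerivAt_Tser (m + 1) y).sub (Real.hasDerivAt_sin y)).const_mul
          ((-1 : ℝ) ^ (m + 1 + 1))
        refine this.congr_deriv ?_
        have : ((-1 : ℝ) ^ (m + 1 + 1)) = (-1 : ℝ) ^ m := by
          rw [pow_succ, pow_succ]; ring
        rw [this]
      · simp [Tser]
      · intro y hy
        exact (ih y hy).2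
      · exact hx
    refine ⟨hTpos, ?_⟩
    apply pos_of_deriv_pos
      (fun y => (-1 : ℝ) ^ (m + 1) * (Pser (m + 1 + 1) y - Real.cos y))
      (fun y => (-1 : ℝ) ^ (m + 1 + 1) * (Tser (m + 1) y - Real.sin y))
    · intro y
      have := ((hasDerivAt_Pser (m + 1) y).sub (Real.hasDerivAt_cos y)).const_mul
        ((-1 : ℝ) ^ (m + 1))
      refine this.congr_deriv ?_
      rw [pow_succ]
      ring
    · simp [Pser_zero]
    · intro y hy
      apply pos_of_deriv_pos
        (fun y => (-1 : ℝ) ^ (m + 1 + 1) * (Tser (m + 1) y - Real.sin y))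
        (fun y => (-1 : ℝ) ^ m * (Pser (m + 1) y - Real.cos y))
      · intro z
        have := ((hasDerivAt_Tser (m + 1) z).sub (Real.hasDerivAt_sin z)).const_mul
          ((-1 : ℝ) ^ (m + 1 + 1))
        refine this.congr_deriv ?_
        have : ((-1 : ℝ) ^ (m + 1 + 1)) = (-1 : ℝ) ^ m := by
          rw [pow_succ, pow_succ]; ring
        rw [this]
      · simp [Tser]
      · intro z hz
        exact (ih z hz).2
      · exact hy
    · exact hx

/-- For every odd `n ≥ 1` and every `k ≥ 1`, `J_{n,k} > 0`. -/
theorem J_pos (n k : ℕ) (hn : 1 ≤ n) (hno : Odd n) (hk : 1 ≤ k) :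
    0 < J n k := by
  set x : ℝ := (n : ℝ) * π / 2 with hxdef
  have hxpos : 0 < x := by
    apply div_pos _ (by norm_num)
    exact mul_pos (by exact_mod_cast hn) Real.pi_pos
  have hcos : Real.cos x = 0 := by
    obtain ⟨m, hm⟩ := hno
    have : x = m * π + π / 2 := by
      rw [hxdef, hm]
      push_cast
      ring
    rw [this, Real.cos_add_pi_div_two, Real.sin_nat_mul_pi, neg_zero]
  have hJ : J n k = (-1 : ℝ) ^ k * (Pser (k + 1) x - Real.cos x) := by
    rw [hcos, sub_zero]
    unfold J Pser
    congr 1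
    apply Finset.sum_congr rfl
    intro j _
    ring
  rw [hJ]
  exact (key k hk x hxpos).2
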